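/- arXiv:2509.05571 — 2 statements merged into one kernel-verified Lean document; each statement's English description precedes it below -/
import Mathlib

section
/- Let n = 2, let d_1, d_2 be unit vectors in ℂ^m with |⟨d_1, d_2⟩|² = 1/2, and let ρ_A be a density matrix on ℂ² with q_i = (ρ_A)_{ii}. Then (P_s(q) − 1/2)² + (1/2)·V(ρ̃_A)² + (1/2)·M(ρ̃_A) = 1/4. -/
open Matrix ComplexOrder

noncomputable section

set_option maxHeartbeats 1000000

/-- Inner product ⟨a, b⟩ = ∑ i, conj (a i) * b i on a finite-dimensional complex space. -/
def ip {k : Type*} [Fintype k] (a b : k → ℂ) : ℂ := ∑ i, star (a i) * b i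

/-- The optimal success probability of minimum-error discrimination of the detector
states `d i` with prior probabilities `q i`: the supremum over all POVMs
`Pov` (positive semidefinite matrices summing to the identity) of
`∑ i, q i * ⟨d i, Pov i (d i)⟩`. -/
def Ps {m n : ℕ} (d : Fin n → Fin m → ℂ) (q : Fin n → ℝ) : ℝ :=
  sSup { x : ℝ | ∃ Pov : Fin n → Matrix (Fin m) (Fin m) ℂ,
    (∀ i, (Pov i).PosSemidef) ∧ (∑ i, Pov i) = 1 ∧
    x = ∑ i, q i * (ip (d i) ((Pov i) *ᵥ (d i))).re }

/-- The visibility `V(ρ̃_A) = √( (2(n−1)/n²) ∑_{i≠k} |⟨d_k, d_i⟩|² |(ρ_A)_{ik}|² )`. -/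
def Vis {m n : ℕ} (d : Fin n → Fin m → ℂ) (ρ : Matrix (Fin n) (Fin n) ℂ) : ℝ :=
  Real.sqrt ((2 * ((n : ℝ) - 1) / (n : ℝ) ^ 2) *
    ∑ i, ∑ k, if i = k then 0 else ‖ip (d k) (d i)‖ ^ 2 * ‖ρ i k‖ ^ 2)

/-- The post-interaction detector state `ρ̃_D = ∑ i, q i • d i (d i)^*`. -/
def detState {m n : ℕ} (d : Fin n → Fin m → ℂ) (q : Fin n → ℝ) :
    Matrix (Fin m) (Fin m) ℂ :=
  ∑ i, (q i : ℂ) • vecMulVec (d i) (star (d i))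

/-- The post-interaction particle state `(ρ̃_A)_{ik} = ⟨d_k, d_i⟩ (ρ_A)_{ik}`. -/
def post {m n : ℕ} (d : Fin n → Fin m → ℂ) (ρ : Matrix (Fin n) (Fin n) ℂ) :
    Matrix (Fin n) (Fin n) ℂ :=
  Matrix.of fun i k => ip (d k) (d i) * ρ i k

/-- The purity `Tr(ρ²)` (as a real number). -/
def purity {k : Type*} [Fintype k] (ρ : Matrix k k ℂ) : ℝ := ((ρ * ρ).trace).re

/-- The normalized mixedness `M(ρ) = (2(n−1)/n²)(1 − Tr(ρ²))`. -/
def Mix {k : Type*} [Fintype k] (n : ℕ) (ρ : Matrix k k ℂ) : ℝ :=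
  (2 * ((n : ℝ) - 1) / (n : ℝ) ^ 2) * (1 - purity ρ)

section auxlem
variable {k : Type*} [Fintype k]

lemma ip_eq_dot (a b : k → ℂ) : ip a b = dotProduct (star a) b := rfl

lemma ip_comm (a b : k → ℂ) : ip b a = star (ip a b) := by
  unfold ip
  rw [star_sum]
  exact Finset.sum_congr rfl fun i _ => by simp [star_mul', mul_comm]

lemma ip_self_nonneg (a : k → ℂ) : 0 ≤ ip a a :=
  Finset.sum_nonneg fun i _ => star_mul_self_nonneg (a i)

lemma ip_smul_right (c : ℂ) (a b : k → ℂ) : ip a (c • b) = c * ip a b := by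
  unfold ip
  rw [Finset.mul_sum]
  exact Finset.sum_congr rfl fun i _ => by simp; ring

lemma ip_sub_right (a b c : k → ℂ) : ip a (b - c) = ip a b - ip a c := by
  unfold ip
  rw [← Finset.sum_sub_distrib]
  exact Finset.sum_congr rfl fun i _ => by simp [mul_sub]

lemma ip_zero_right (a : k → ℂ) : ip a (0 : k → ℂ) = 0 := by simp [ip]

lemma ip_combo (α γ δ ε : ℂ) (a b : k → ℂ) :
    ip (fun i => α * a i + γ * b i) (fun i => δ * a i + ε * b i) =
      star α * δ * ip a a + star α * ε * ip a b + star γ * δ * ip b a +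
        star γ * ε * ip b b := by
  simp only [ip, Finset.mul_sum, ← Finset.sum_add_distrib]
  exact Finset.sum_congr rfl fun i _ => by simp only [star_add, star_mul']; ring

lemma ip_mulVec_trace (Pi0 : Matrix k k ℂ) (a : k → ℂ) :
    (Pi0 * vecMulVec a (star a)).trace = ip a (Pi0 *ᵥ a) := by
  simp only [Matrix.trace, Matrix.diag, Matrix.mul_apply, vecMulVec_apply, ip, mulVec,
    dotProduct, Pi.star_apply, Finset.mul_sum]
  exact Finset.sum_congr rfl fun i _ => Finset.sum_congr rfl fun j _ => by ring

lemma vecMulVec_mulVec (a x : k → ℂ) :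
    vecMulVec a (star a) *ᵥ x = ip a x • a := by
  funext i
  simp only [mulVec, dotProduct, vecMulVec_apply, Pi.star_apply, ip, Pi.smul_apply,
    smul_eq_mul, Finset.sum_mul]
  exact Finset.sum_congr rfl fun j _ => by ring

omit [Fintype k] in
lemma vecMulVec_herm (a : k → ℂ) :
    (vecMulVec a (star a)).conjTranspose = vecMulVec a (star a) := by
  ext i j
  simp only [conjTranspose_apply, vecMulVec_apply, Pi.star_apply, star_mul', star_star]
  ring

end auxlem

lemma helstrom {m : ℕ} (d : Fin 2 → Fin m → ℂ)
    (hd : ∀ i, ip (d i) (d i) = 1)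
    (hover : ‖ip (d 0) (d 1)‖ ^ 2 = 1 / 2)
    (q : Fin 2 → ℝ) (hq0 : 0 ≤ q 0) (hq1 : 0 ≤ q 1) (hsum : q 0 + q 1 = 1) :
    Ps d q = (1 + Real.sqrt (q 0 ^ 2 + q 1 ^ 2)) / 2 := by
  set q0 := q 0 with hq0def
  set q1 := q 1 with hq1def
  set s : ℂ := ip (d 0) (d 1) with hs
  have hsc : s * star s = (1/2 : ℂ) := by
    rw [Complex.star_def, Complex.mul_conj, Complex.normSq_eq_norm_sq,
      hs, hover]
    norm_num
  have hs10 : ip (d 1) (d 0) = star s := by rw [hs]; exact ip_comm (d 0) (d 1)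
  clear_value s
  set D := Real.sqrt (q0 ^ 2 + q1 ^ 2) with hDdef
  have hD0 : 0 ≤ D := Real.sqrt_nonneg _
  have hD2 : D ^ 2 = q0 ^ 2 + q1 ^ 2 := Real.sq_sqrt (by positivity)
  clear_value D
  set P := (q0 - q1 + D) / 2 with hPdef
  have hchar : P ^ 2 = (q0 - q1) * P + q0 * q1 / 2 := by
    rw [hPdef]; linear_combination hD2 / 4
  have hP0 : 0 ≤ P := by
    rw [hPdef]
    nlinarith [hD2, hD0, mul_nonneg hq0 hq1, sq_nonneg (D - q1 + q0)]
  have hL0 : q0 - q1 - P ≤ 0 := by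
    rw [hPdef]
    nlinarith [hD2, hD0, mul_nonneg hq0 hq1, sq_nonneg (D - q0 + q1)]
  have hPD : q1 + P = (1 + D) / 2 := by rw [hPdef]; linarith
  clear_value P
  set NN := (P + q1 / 2) ^ 2 + q1 ^ 2 / 4 with hNNdef
  have h2D : 1 ≤ 2 * D ^ 2 := by nlinarith [hD2, sq_nonneg (q0 - q1)]
  have hNN : 0 < NN := by
    rw [hNNdef, hPdef]
    nlinarith [h2D, hD0, hq0, mul_nonneg hq0 hD0, sq_nonneg q1]
  clear_value NN
  have hcharC := congrArg (fun r : ℝ => (r : ℂ)) hchar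
  have hNNC := congrArg (fun r : ℝ => (r : ℂ)) hNNdef
  push_cast at hcharC hNNC
  set A1 : ℂ := ((P + q1 : ℝ) : ℂ) with hA1
  set G1 : ℂ := -((q1 : ℝ) : ℂ) * star s with hG1
  set D1 : ℂ := -((P : ℝ) : ℂ) * s with hD1
  set E1 : ℂ := ((P + q1 / 2 : ℝ) : ℂ) with hE1
  clear_value A1 G1 D1 E1
  set u : Fin m → ℂ := fun i => A1 * d 0 i + G1 * d 1 i with hu
  set w : Fin m → ℂ := fun i => D1 * d 0 i + E1 * d 1 i with hw
  clear_value u w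
  have hstarA1 : star A1 = A1 := by rw [hA1]; exact Complex.conj_ofReal _
  have hstarE1 : star E1 = E1 := by rw [hE1]; exact Complex.conj_ofReal _
  have hstarG1 : star G1 = -((q1 : ℝ) : ℂ) * s := by
    rw [hG1]; simp [Complex.conj_ofReal]
  have hstarD1 : star D1 = -((P : ℝ) : ℂ) * star s := by
    rw [hD1]; simp [Complex.conj_ofReal]
  -- coefficient identities
  have C00 : ((NN : ℝ) : ℂ) * ((q0 : ℝ) : ℂ)
      = ((P : ℝ) : ℂ) * (A1 * star A1) + ((2 * (q0 - q1 - P) : ℝ) : ℂ) * (D1 * star D1) := by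
    rw [hstarA1, hstarD1, hA1, hD1]
    push_cast
    linear_combination (-2 * ((q0:ℂ) - q1 - P) * (P:ℂ)^2) * hsc + (q0:ℂ) * hNNC
      + (-(q1:ℂ)) * hcharC
  have C01 : (0 : ℂ)
      = ((P : ℝ) : ℂ) * (A1 * star G1) + ((2 * (q0 - q1 - P) : ℝ) : ℂ) * (D1 * star E1) := by
    rw [hstarG1, hstarE1, hA1, hD1, hE1]
    push_cast
    linear_combination (-2 * (P:ℂ) * s) * hcharC
  have C10 : (0 : ℂ)
      = ((P : ℝ) : ℂ) * (G1 * star A1) + ((2 * (q0 - q1 - P) : ℝ) : ℂ) * (E1 * star D1) := by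
    rw [hstarA1, hstarD1, hA1, hG1, hE1]
    push_cast
    linear_combination (-2 * (P:ℂ) * star s) * hcharC
  have C11 : -((NN : ℝ) : ℂ) * ((q1 : ℝ) : ℂ)
      = ((P : ℝ) : ℂ) * (G1 * star G1) + ((2 * (q0 - q1 - P) : ℝ) : ℂ) * (E1 * star E1) := by
    rw [hstarG1, hstarE1, hG1, hE1]
    push_cast
    linear_combination (-(P:ℂ) * (q1:ℂ)^2) * hsc + (-(q1:ℂ)) * hNNC
      + (2 * (P:ℂ) + (q1:ℂ)) * hcharC
  -- inner product facts
  have hipuu : ip u u = ((NN : ℝ) : ℂ) := by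
    rw [hu, ip_combo, hd 0, hd 1, ← hs, hs10, hstarA1, hstarG1, hA1, hG1]
    push_cast
    linear_combination (-2 * (q1:ℂ) * ((P:ℂ) + q1) + (q1:ℂ)^2) * hsc - hNNC
  have hipuw : ip u w = 0 := by
    rw [hu, hw, ip_combo, hd 0, hd 1, ← hs, hs10, hstarA1, hstarG1, hA1, hD1, hE1]
    push_cast
    linear_combination ((q1:ℂ) * (P:ℂ) * s) * hsc
  -- the spectral decomposition of the Helstrom matrix
  have hdecomp : ((NN : ℝ) : ℂ) • (((q0 : ℝ) : ℂ) • vecMulVec (d 0) (star (d 0))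
        - ((q1 : ℝ) : ℂ) • vecMulVec (d 1) (star (d 1)))
      = ((P : ℝ) : ℂ) • vecMulVec u (star u)
        + ((2 * (q0 - q1 - P) : ℝ) : ℂ) • vecMulVec w (star w) := by
    ext i j
    simp only [Matrix.smul_apply, Matrix.sub_apply, Matrix.add_apply, vecMulVec_apply, Pi.star_apply,
      smul_eq_mul, hu, hw, star_add, star_mul']
    linear_combination (d 0 i * star (d 0 j)) * C00 + (d 0 i * star (d 1 j)) * C01
      + (d 1 i * star (d 0 j)) * C10 + (d 1 i * star (d 1 j)) * C11
  -- trace identity for an arbitrary matrix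
  have key : ∀ Pi0 : Matrix (Fin m) (Fin m) ℂ,
      ((NN : ℝ) : ℂ) * (((q0 : ℝ) : ℂ) * ip (d 0) (Pi0 *ᵥ d 0)
          - ((q1 : ℝ) : ℂ) * ip (d 1) (Pi0 *ᵥ d 1))
        = ((P : ℝ) : ℂ) * ip u (Pi0 *ᵥ u)
          + ((2 * (q0 - q1 - P) : ℝ) : ℂ) * ip w (Pi0 *ᵥ w) := by
    intro Pi0
    have h := congrArg (fun M => (Pi0 * M).trace) hdecomp
    simpa only [Matrix.mul_smul, Matrix.mul_sub, Matrix.mul_add, Matrix.trace_smul,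
      Matrix.trace_sub, Matrix.trace_add, smul_eq_mul, ip_mulVec_trace] using h
  have keyR : ∀ Pi0 : Matrix (Fin m) (Fin m) ℂ,
      NN * (q0 * (ip (d 0) (Pi0 *ᵥ d 0)).re - q1 * (ip (d 1) (Pi0 *ᵥ d 1)).re)
        = P * (ip u (Pi0 *ᵥ u)).re + (2 * (q0 - q1 - P)) * (ip w (Pi0 *ᵥ w)).re := by
    intro Pi0
    have h := congrArg Complex.re (key Pi0)
    simpa only [Complex.re_ofReal_mul, Complex.sub_re, Complex.add_re] using h
  -- the upper bound
  have hub : ∀ x ∈ { x : ℝ | ∃ Pov : Fin 2 → Matrix (Fin m) (Fin m) ℂ,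
      (∀ i, (Pov i).PosSemidef) ∧ (∑ i, Pov i) = 1 ∧
      x = ∑ i, q i * (ip (d i) ((Pov i) *ᵥ (d i))).re }, x ≤ (1 + D) / 2 := by
    rintro x ⟨Pov, hpos, hsumP, rfl⟩
    rw [Fin.sum_univ_two] at hsumP ⊢
    rw [← hq0def, ← hq1def]
    have h1 : Pov 1 = 1 - Pov 0 := eq_sub_of_add_eq' hsumP
    rw [h1, sub_mulVec, one_mulVec, ip_sub_right, hd 1]
    have hU := keyR (Pov 0)
    have hRW : 0 ≤ (ip w (Pov 0 *ᵥ w)).re := by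
      have h := (hpos 0).dotProduct_mulVec_nonneg w
      rw [← ip_eq_dot] at h
      exact (Complex.nonneg_iff.mp h).1
    have hRU : (ip u (Pov 0 *ᵥ u)).re ≤ NN := by
      have hpos1 := hpos 1
      rw [h1] at hpos1
      have h := hpos1.dotProduct_mulVec_nonneg u
      rw [← ip_eq_dot, sub_mulVec, one_mulVec, ip_sub_right, hipuu] at h
      have h2 := (Complex.nonneg_iff.mp h).1
      rw [Complex.sub_re, Complex.ofReal_re] at h2
      linarith
    have hdiff : q0 * (ip (d 0) (Pov 0 *ᵥ d 0)).re - q1 * (ip (d 1) (Pov 0 *ᵥ d 1)).re ≤ P := by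
      have h2 : NN * (q0 * (ip (d 0) (Pov 0 *ᵥ d 0)).re
          - q1 * (ip (d 1) (Pov 0 *ᵥ d 1)).re) ≤ NN * P := by
        rw [hU]
        have ha : P * (ip u (Pov 0 *ᵥ u)).re ≤ P * NN := mul_le_mul_of_nonneg_left hRU hP0
        have hb : (2 * (q0 - q1 - P)) * (ip w (Pov 0 *ᵥ w)).re ≤ 0 :=
          mul_nonpos_of_nonpos_of_nonneg (by linarith) hRW
        linarith [ha, hb]
      exact le_of_mul_le_mul_left (by linarith) hNN
    rw [Complex.sub_re, Complex.one_re]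
    nlinarith [hdiff, hPD]
  -- the optimal POVM
  set Pi0 : Matrix (Fin m) (Fin m) ℂ := ((NN⁻¹ : ℝ) : ℂ) • vecMulVec u (star u) with hPi0def
  have hNNinv : ((NN⁻¹ : ℝ) : ℂ) * ((NN : ℝ) : ℂ) = 1 := by
    rw [← Complex.ofReal_mul, inv_mul_cancel₀ hNN.ne']
    simp
  have hPi0herm : Pi0.conjTranspose = Pi0 := by
    rw [hPi0def, conjTranspose_smul, vecMulVec_herm]
    congr 1
    exact Complex.conj_ofReal _
  have hPi0mul : ∀ x : Fin m → ℂ, Pi0 *ᵥ x = (((NN⁻¹ : ℝ) : ℂ) * ip u x) • u := by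
    intro x
    rw [hPi0def, smul_mulVec, _root_.vecMulVec_mulVec, smul_smul]
  have hPi0psd : Pi0.PosSemidef := by
    refine PosSemidef.of_dotProduct_mulVec_nonneg hPi0herm fun x => ?_
    rw [hPi0mul x, ← ip_eq_dot, ip_smul_right, ip_comm u x]
    rw [mul_assoc]
    exact mul_nonneg (Complex.zero_le_real.mpr (by positivity)) (mul_star_self_nonneg _)
  have hPi1psd : (1 - Pi0).PosSemidef := by
    refine PosSemidef.of_dotProduct_mulVec_nonneg ?_ ?_
    · show (1 - Pi0)ᴴ = 1 - Pi0
      rw [conjTranspose_sub, conjTranspose_one, hPi0herm]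
    · intro x
      have hyy : star x ⬝ᵥ ((1 - Pi0) *ᵥ x)
          = ip (fun i => (1:ℂ) * x i + (-(((NN⁻¹:ℝ):ℂ) * ip u x)) * u i)
              (fun i => (1:ℂ) * x i + (-(((NN⁻¹:ℝ):ℂ) * ip u x)) * u i) := by
        have hxu : ip x u = star (ip u x) := ip_comm u x
        rw [ip_combo, sub_mulVec, one_mulVec, ← ip_eq_dot, ip_sub_right, hPi0mul x,
          ip_smul_right, hipuu, hxu]
        simp only [star_one, star_neg, star_mul', star_star,
          show star (((NN⁻¹:ℝ):ℂ)) = ((NN⁻¹:ℝ):ℂ) from Complex.conj_ofReal _]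
        linear_combination (-(((NN⁻¹:ℝ):ℂ)) * star (ip u x) * ip u x) * hNNinv
      rw [hyy]
      exact ip_self_nonneg _
  have hval : q0 * (ip (d 0) (Pi0 *ᵥ d 0)).re + q1 * (ip (d 1) ((1 - Pi0) *ᵥ d 1)).re
      = (1 + D) / 2 := by
    have hU := keyR Pi0
    have hRU : ip u (Pi0 *ᵥ u) = ((NN : ℝ) : ℂ) := by
      rw [hPi0mul u, ip_smul_right, hipuu]
      rw [show ((NN⁻¹:ℝ):ℂ) * ((NN:ℝ):ℂ) * ((NN:ℝ):ℂ) = (((NN⁻¹:ℝ):ℂ) * ((NN:ℝ):ℂ))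
        * ((NN:ℝ):ℂ) from by ring, hNNinv, one_mul]
    have hRW : ip w (Pi0 *ᵥ w) = 0 := by
      rw [hPi0mul w, ip_smul_right, hipuw, mul_zero, zero_mul]
    rw [hRU, hRW] at hU
    simp only [Complex.ofReal_re, Complex.zero_re, mul_zero, add_zero] at hU
    have hdiff : q0 * (ip (d 0) (Pi0 *ᵥ d 0)).re - q1 * (ip (d 1) (Pi0 *ᵥ d 1)).re = P :=
      mul_left_cancel₀ hNN.ne' (by linarith [hU])
    rw [sub_mulVec, one_mulVec, ip_sub_right, hd 1, Complex.sub_re, Complex.one_re]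
    linarith [hdiff, hPD]
  have hmem : (1 + D) / 2 ∈ { x : ℝ | ∃ Pov : Fin 2 → Matrix (Fin m) (Fin m) ℂ,
      (∀ i, (Pov i).PosSemidef) ∧ (∑ i, Pov i) = 1 ∧
      x = ∑ i, q i * (ip (d i) ((Pov i) *ᵥ (d i))).re } := by
    refine ⟨![Pi0, 1 - Pi0], fun i => ?_, ?_, ?_⟩
    · fin_cases i
      · simpa using hPi0psd
      · simpa using hPi1psd
    · rw [Fin.sum_univ_two]
      simp
    · rw [Fin.sum_univ_two]
      simp only [Matrix.cons_val_zero, Matrix.cons_val_one, Matrix.head_cons]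
      rw [← hq0def, ← hq1def, hval]
  unfold Ps
  apply le_antisymm
  · exact csSup_le ⟨(1 + D) / 2, hmem⟩ hub
  · exact le_csSup ⟨(1 + D) / 2, fun x hx => hub x hx⟩ hmem

/-- for the two-path interferometer with detector states of overlap
`|⟨d₁,d₂⟩|² = 1/2`, the triality among path distinguishability, visibility and
mixedness is complete (an identity). -/
theorem stmt3 (m : ℕ) (d : Fin 2 → Fin m → ℂ)
    (hd : ∀ i, ip (d i) (d i) = 1)
    (hover : ‖ip (d 0) (d 1)‖ ^ 2 = 1 / 2)
    (ρA : Matrix (Fin 2) (Fin 2) ℂ) (hpsd : ρA.PosSemidef) (htr : ρA.trace = 1)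
    (q : Fin 2 → ℝ) (hq : ∀ i, (q i : ℂ) = ρA i i) :
    (Ps d q - 1 / 2) ^ 2 + (1 / 2) * (Vis d ρA) ^ 2 + (1 / 2) * Mix 2 (post d ρA)
      = 1 / 4 := by
  have h10 : ρA 1 0 = star (ρA 0 1) := by
    have h : ρAᴴ 1 0 = star (ρA 0 1) := rfl
    rw [← h, hpsd.1]
  have hqnn : ∀ i, 0 ≤ q i := by
    intro i
    have h := hpsd.dotProduct_mulVec_nonneg (Pi.single i 1)
    have heq : star (Pi.single i 1 : Fin 2 → ℂ) ⬝ᵥ (ρA *ᵥ Pi.single i 1) = ρA i i := by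
      simp [dotProduct, mulVec, Pi.single_apply, Fin.sum_univ_two]
    rw [heq, ← hq i] at h
    exact Complex.zero_le_real.mp h
  have hsum : q 0 + q 1 = 1 := by
    have h := htr
    rw [Matrix.trace_fin_two, ← hq 0, ← hq 1] at h
    exact_mod_cast h
  rw [helstrom d hd hover q (hqnn 0) (hqnn 1) hsum]
  set z : ℂ := ρA 0 1 with hz
  have hs10n : ‖ip (d 1) (d 0)‖ ^ 2 = 1 / 2 := by
    rw [ip_comm (d 0) (d 1), norm_star]
    exact hover
  have hr01 : ‖ρA 1 0‖ = ‖z‖ := by rw [h10, norm_star]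
  have hVis : (Vis d ρA) ^ 2 = (1 / 2) * ‖z‖ ^ 2 := by
    unfold Vis
    rw [Real.sq_sqrt]
    · rw [Fin.sum_univ_two]
      simp only [Fin.sum_univ_two, if_true, if_neg, reduceIte]
      norm_num [hr01, ← hz]
      have h1 : ‖ip (d 0) (d 1)‖ ^ 2 = 1/2 := by
        exact hover
      have h2 : ‖ip (d 1) (d 0)‖ ^ 2 = 1/2 := by
        exact hs10n
      rw [h1, h2]; ring
    · apply mul_nonneg
      · norm_num
      · apply Finset.sum_nonneg
        intro i _
        apply Finset.sum_nonneg
        intro k _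
        split <;> positivity
  have hsc : ip (d 0) (d 1) * star (ip (d 0) (d 1)) = (1/2 : ℂ) := by
    rw [Complex.star_def, Complex.mul_conj, Complex.normSq_eq_norm_sq,
      hover]
    norm_num
  have hzz : z * star z = ((‖z‖ ^ 2 : ℝ) : ℂ) := by
    rw [Complex.star_def, Complex.mul_conj, Complex.normSq_eq_norm_sq]
  have hpurC : ((post d ρA) * (post d ρA)).trace
      = ((q 0 : ℝ) : ℂ) ^ 2 + ((q 1 : ℝ) : ℂ) ^ 2 + ((‖z‖ ^ 2 : ℝ) : ℂ) := by
    rw [Matrix.trace_fin_two]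
    simp only [Matrix.mul_apply, Fin.sum_univ_two, post, Matrix.of_apply]
    rw [hd 0, hd 1, ip_comm (d 0) (d 1), h10, ← hz, ← hq 0, ← hq 1]
    linear_combination (2 * z * star z) * hsc + 2 * hzz * (1/2 : ℂ)
  have hpur : purity (post d ρA) = (q 0) ^ 2 + (q 1) ^ 2 + ‖z‖ ^ 2 := by
    unfold purity
    rw [hpurC]
    simp [Complex.add_re, ← Complex.ofReal_pow, Complex.ofReal_re]
  have hMix : Mix 2 (post d ρA) = (1 / 2) * (1 - ((q 0) ^ 2 + (q 1) ^ 2 + ‖z‖ ^ 2)) := by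
    unfold Mix
    rw [hpur]
    norm_num
  rw [hVis, hMix]
  have hD2 : (Real.sqrt (q 0 ^ 2 + q 1 ^ 2)) ^ 2 = q 0 ^ 2 + q 1 ^ 2 :=
    Real.sq_sqrt (by positivity)
  linear_combination hD2 / 4
end
end

section
/- Let n ≥ 2, let d_1, …, d_n be unit vectors in ℂ^m, let p = (p_1,…,p_n) be a probability vector, and let u_1, …, u_n be unit vectors in ℂ^n. For the pure bipartite input state ψ_AB = Σ_i √p_i · e_i ⊗ u_i, with reduced state ρ_A given by (ρ_A)_{ik} = √(p_i p_k) ⟨u_k, u_i⟩, normalized concurrence squared E(ψ)² = (2(n−1)/n²)(1 − Tr(ρ_A²)), and post-interaction bipartite state ρ̃_AB = Σ_{i,j} √(p_i p_j) ⟨d_j, d_i⟩ (e_i e_j^*) ⊗ (u_i u_j^*), one has (P_s(p) − 1/n)² + V(ρ̃_A)² + E(ψ)² ≤ (n²−1)/n² − (2(n−1)/n²)·Tr(ρ̃_AB²). -/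
open Matrix ComplexOrder

noncomputable section

/-! ### Auxiliary lemmas -/

lemma ip_eq {k : Type*} [Fintype k] (a b : k → ℂ) : ip a b = dotProduct (star a) b := by
  simp [ip, dotProduct]

lemma star_ip {k : Type*} [Fintype k] (a b : k → ℂ) : star (ip a b) = ip b a := by
  simp [ip, star_sum, mul_comm]

lemma norm_ip_swap {k : Type*} [Fintype k] (a b : k → ℂ) : ‖ip a b‖ = ‖ip b a‖ := by
  rw [← star_ip a b, Complex.star_def, RCLike.norm_conj]

lemma sum_mulVec' {m : ℕ} {ι : Type*} (s : Finset ι) (M : ι → Matrix (Fin m) (Fin m) ℂ)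
    (x : Fin m → ℂ) : (∑ k ∈ s, M k) *ᵥ x = ∑ k ∈ s, (M k) *ᵥ x := by
  classical
  induction s using Finset.induction_on with
  | empty => simp
  | insert _ _ h ih => simp [Finset.sum_insert h, Matrix.add_mulVec, ih]

lemma ip_sum_right {k : Type*} [Fintype k] {ι : Type*} (s : Finset ι) (x : k → ℂ)
    (v : ι → k → ℂ) : ip x (∑ j ∈ s, v j) = ∑ j ∈ s, ip x (v j) := by
  simp [ip, Finset.mul_sum]
  rw [Finset.sum_comm]

lemma psd_cs {N : ℕ} {M : Matrix (Fin N) (Fin N) ℂ} (hM : M.PosSemidef) (x y : Fin N → ℂ) :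
    ‖ip x (M *ᵥ y)‖ ^ 2 ≤ (ip x (M *ᵥ x)).re * (ip y (M *ᵥ y)).re := by
  classical
  obtain ⟨k, v, hv⟩ := Matrix.posSemidef_iff_eq_sum_vecMulVec.mp hM
  set B : Matrix (Fin k) (Fin N) ℂ := Matrix.of fun i j => star (v i j) with hB
  have hMB : M = Bᴴ * B := by
    ext i j
    simp [hv, hB, Matrix.mul_apply, vecMulVec_apply, Matrix.sum_apply]
  have hfact : ∀ a b : Fin N → ℂ, ip a (M *ᵥ b) = star (B *ᵥ a) ⬝ᵥ (B *ᵥ b) := by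
    intro a b
    rw [ip_eq, star_mulVec, hMB, ← mulVec_mulVec, dotProduct_mulVec]
  set V : EuclideanSpace ℂ (Fin k) := (WithLp.equiv 2 (Fin k → ℂ)).symm (B *ᵥ x) with hV
  set W : EuclideanSpace ℂ (Fin k) := (WithLp.equiv 2 (Fin k → ℂ)).symm (B *ᵥ y) with hW
  have hi : ∀ (a b : Fin k → ℂ),
      (inner ℂ ((WithLp.equiv 2 (Fin k → ℂ)).symm a) ((WithLp.equiv 2 (Fin k → ℂ)).symm b) : ℂ)
        = star a ⬝ᵥ b := by
    intro a b
    rw [EuclideanSpace.inner_eq_star_dotProduct]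
    simp [dotProduct, mul_comm]
  have key := inner_mul_inner_self_le (𝕜 := ℂ) V W
  rw [hV, hW] at key
  rw [hi, hi, hi, hi] at key
  have hsymm : ‖star (B *ᵥ y) ⬝ᵥ (B *ᵥ x)‖
      = ‖star (B *ᵥ x) ⬝ᵥ (B *ᵥ y)‖ := by
    rw [← ip_eq, ← ip_eq, norm_ip_swap]
  rw [hfact, hfact, hfact]
  rw [hsymm] at key
  simpa [pow_two] using key

lemma ip_expand_sub {N : ℕ} (B : Matrix (Fin N) (Fin N) ℂ) (x y : Fin N → ℂ) :
    ip x ((1 - B) *ᵥ y) = ip x y - ip x (B *ᵥ y) := by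
  rw [Matrix.sub_mulVec, Matrix.one_mulVec]
  simp [ip, mul_sub, Finset.sum_sub_distrib, Pi.sub_apply]

lemma ip_expand_add {N : ℕ} (B : Matrix (Fin N) (Fin N) ℂ) (x y : Fin N → ℂ) :
    ip x ((1 + B) *ᵥ y) = ip x y + ip x (B *ᵥ y) := by
  rw [Matrix.add_mulVec, Matrix.one_mulVec]
  simp [ip, mul_add, Finset.sum_add_distrib, Pi.add_apply]

lemma arith (p q β γ T u v : ℝ) (hp : 0 ≤ p) (hq : 0 ≤ q)
    (hβ1 : β ≤ 1) (hβ2 : -1 ≤ β) (hγ1 : γ ≤ 1) (hγ2 : -1 ≤ γ)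
    (hu : 0 ≤ u) (hv : 0 ≤ v) (hT : 0 ≤ T)
    (hu2 : u ^ 2 ≤ (1 - β) * (1 - γ)) (hv2 : v ^ 2 ≤ (1 + β) * (1 + γ))
    (h2g : 2 * Real.sqrt T ≤ u + v) :
    p * β - q * γ ≤ Real.sqrt ((p + q) ^ 2 - 4 * p * q * T) := by
  have h4T : 4 * T ≤ (u + v) ^ 2 := by
    nlinarith [Real.sq_sqrt hT, Real.sqrt_nonneg T]
  set X := (1 - β) * (1 + β) with hX
  set Y := (1 - γ) * (1 + γ) with hY
  have hX0 : 0 ≤ X := mul_nonneg (by linarith) (by linarith)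
  have hY0 : 0 ≤ Y := mul_nonneg (by linarith) (by linarith)
  have huv : u * v ≤ Real.sqrt X * Real.sqrt Y := by
    rw [← Real.sqrt_mul hX0]
    rw [show X * Y = ((1 - β) * (1 - γ)) * ((1 + β) * (1 + γ)) by ring]
    refine (Real.le_sqrt (mul_nonneg hu hv) (mul_nonneg (by nlinarith) (by nlinarith))).mpr ?_
    calc (u * v) ^ 2 = u ^ 2 * v ^ 2 := by ring
    _ ≤ ((1 - β) * (1 - γ)) * ((1 + β) * (1 + γ)) := by
        apply mul_le_mul hu2 hv2 (sq_nonneg _) (by nlinarith)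
  have hAM : 2 * p * q * (Real.sqrt X * Real.sqrt Y) ≤ p ^ 2 * X + q ^ 2 * Y := by
    nlinarith [sq_nonneg (p * Real.sqrt X - q * Real.sqrt Y), Real.sq_sqrt hX0, Real.sq_sqrt hY0]
  have key : (p * β - q * γ) ^ 2 ≤ (p + q) ^ 2 - 4 * p * q * T := by
    have hpq : 0 ≤ p * q := mul_nonneg hp hq
    nlinarith [mul_le_mul_of_nonneg_left h4T hpq, mul_le_mul_of_nonneg_left hu2 hpq,
      mul_le_mul_of_nonneg_left hv2 hpq, mul_le_mul_of_nonneg_left huv hpq]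
  rcases le_or_gt (p * β - q * γ) 0 with h | h
  · exact h.trans (Real.sqrt_nonneg _)
  · exact (Real.le_sqrt h.le (by nlinarith [sq_nonneg (p * β - q * γ)])).mpr key

lemma pair_bound {N : ℕ} {B : Matrix (Fin N) (Fin N) ℂ}
    (h1 : (1 - B).PosSemidef) (h2 : (1 + B).PosSemidef)
    {x y : Fin N → ℂ} (hx : ip x x = 1) (hy : ip y y = 1)
    {p q : ℝ} (hp : 0 ≤ p) (hq : 0 ≤ q) :
    p * (ip x (B *ᵥ x)).re - q * (ip y (B *ᵥ y)).re ≤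
      Real.sqrt ((p + q) ^ 2 - 4 * p * q * ‖ip x y‖ ^ 2) := by
  set β := (ip x (B *ᵥ x)).re with hβ
  set γ := (ip y (B *ᵥ y)).re with hγ
  have hre1 : (ip x ((1 - B) *ᵥ x)).re = 1 - β := by
    rw [ip_expand_sub, hx]; simp [hβ]
  have hre2 : (ip x ((1 + B) *ᵥ x)).re = 1 + β := by
    rw [ip_expand_add, hx]; simp [hβ]
  have hre3 : (ip y ((1 - B) *ᵥ y)).re = 1 - γ := by
    rw [ip_expand_sub, hy]; simp [hγ]
  have hre4 : (ip y ((1 + B) *ᵥ y)).re = 1 + γ := by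
    rw [ip_expand_add, hy]; simp [hγ]
  have hb1 : β ≤ 1 := by
    have := h1.re_dotProduct_nonneg x
    rw [← ip_eq, RCLike.re_to_complex, hre1] at this; linarith
  have hb2 : -1 ≤ β := by
    have := h2.re_dotProduct_nonneg x
    rw [← ip_eq, RCLike.re_to_complex, hre2] at this; linarith
  have hg1 : γ ≤ 1 := by
    have := h1.re_dotProduct_nonneg y
    rw [← ip_eq, RCLike.re_to_complex, hre3] at this; linarith
  have hg2 : -1 ≤ γ := by
    have := h2.re_dotProduct_nonneg y
    rw [← ip_eq, RCLike.re_to_complex, hre4] at this; linarith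
  have hu2 : ‖ip x ((1 - B) *ᵥ y)‖ ^ 2 ≤ (1 - β) * (1 - γ) := by
    have := psd_cs h1 x y
    rwa [hre1, hre3] at this
  have hv2 : ‖ip x ((1 + B) *ᵥ y)‖ ^ 2 ≤ (1 + β) * (1 + γ) := by
    have := psd_cs h2 x y
    rwa [hre2, hre4] at this
  have hsum : ip x ((1 - B) *ᵥ y) + ip x ((1 + B) *ᵥ y) = 2 * ip x y := by
    rw [ip_expand_sub, ip_expand_add]; ring
  have h2g : 2 * Real.sqrt (‖ip x y‖ ^ 2) ≤
      ‖ip x ((1 - B) *ᵥ y)‖ + ‖ip x ((1 + B) *ᵥ y)‖ := by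
    rw [Real.sqrt_sq (norm_nonneg _)]
    calc 2 * ‖ip x y‖ = ‖(2 : ℂ) * ip x y‖ := by
          rw [norm_mul]; norm_num
    _ = ‖ip x ((1 - B) *ᵥ y) + ip x ((1 + B) *ᵥ y)‖ := by rw [hsum]
    _ ≤ _ := norm_add_le _ _
  exact arith p q β γ (‖ip x y‖ ^ 2) _ _ hp hq hb1 hb2 hg1 hg2 (norm_nonneg _) (norm_nonneg _)
    (sq_nonneg _) hu2 hv2 h2g

lemma posSemidef_sum {m : ℕ} {ι : Type*} (s : Finset ι) (P : ι → Matrix (Fin m) (Fin m) ℂ)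
    (h : ∀ j ∈ s, (P j).PosSemidef) : (∑ j ∈ s, P j).PosSemidef := by
  classical
  induction s using Finset.induction_on with
  | empty => simpa using Matrix.PosSemidef.zero
  | @insert a s ha ih =>
      rw [Finset.sum_insert ha]
      exact (h a (Finset.mem_insert_self a s)).add
        (ih fun j hj => h j (Finset.mem_insert_of_mem hj))

lemma povm_bound {m n : ℕ} (d : Fin n → Fin m → ℂ) (hd : ∀ i, ip (d i) (d i) = 1)
    (p : Fin n → ℝ) (hp : ∀ i, 0 ≤ p i) (hp1 : ∑ i, p i = 1)
    (Pov : Fin n → Matrix (Fin m) (Fin m) ℂ) (hPov : ∀ i, (Pov i).PosSemidef)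
    (hsum : ∑ i, Pov i = 1) :
    (n : ℝ) * (∑ i, p i * (ip (d i) (Pov i *ᵥ d i)).re) ≤
      1 + (1/2) * ∑ i, ∑ k,
        Real.sqrt ((p i + p k) ^ 2 - 4 * p i * p k * ‖ip (d i) (d k)‖ ^ 2) := by
  classical
  have hIm : ∀ i, (1 : Matrix (Fin m) (Fin m) ℂ) - Pov i
      = ∑ j ∈ Finset.univ.erase i, Pov j := by
    intro i
    rw [← hsum, ← Finset.add_sum_erase _ _ (Finset.mem_univ i)]
    exact add_sub_cancel_left _ _
  have hPSD1 : ∀ i k, (1 - (Pov i - Pov k)).PosSemidef := by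
    intro i k
    have e : (1 : Matrix (Fin m) (Fin m) ℂ) - (Pov i - Pov k) = (1 - Pov i) + Pov k := by abel
    rw [e, hIm i]
    exact (posSemidef_sum _ _ fun j _ => hPov j).add (hPov k)
  have hPSD2 : ∀ i k, (1 + (Pov i - Pov k)).PosSemidef := by
    intro i k
    have e : (1 : Matrix (Fin m) (Fin m) ℂ) + (Pov i - Pov k) = (1 - Pov k) + Pov i := by abel
    rw [e, hIm k]
    exact (posSemidef_sum _ _ fun j _ => hPov j).add (hPov i)
  set F : Fin n → Fin n → ℝ :=
    fun i k => p i * (ip (d i) ((Pov i - Pov k) *ᵥ d i)).re with hF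
  have h1 : ∀ i, ∑ k, (ip (d i) (Pov k *ᵥ d i)).re = 1 := by
    intro i
    rw [← Complex.re_sum, ← ip_sum_right, ← sum_mulVec', hsum, Matrix.one_mulVec, hd i]
    simp
  have hsplit : ∀ i k, F i k
      = p i * (ip (d i) (Pov i *ᵥ d i)).re - p i * (ip (d i) (Pov k *ᵥ d i)).re := by
    intro i k
    rw [hF]
    simp only [Matrix.sub_mulVec]
    rw [show ip (d i) (Pov i *ᵥ d i - Pov k *ᵥ d i)
        = ip (d i) (Pov i *ᵥ d i) - ip (d i) (Pov k *ᵥ d i) by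
      simp [ip, mul_sub, Finset.sum_sub_distrib, Pi.sub_apply]]
    rw [Complex.sub_re]; ring
  have hinner : ∀ i, ∑ k, F i k
      = (n : ℝ) * (p i * (ip (d i) (Pov i *ᵥ d i)).re) - p i := by
    intro i
    rw [Finset.sum_congr rfl fun k _ => hsplit i k, Finset.sum_sub_distrib,
      Finset.sum_const, Finset.card_univ, Fintype.card_fin, nsmul_eq_mul,
      ← Finset.mul_sum, h1 i, mul_one]
  have hkey : ∑ i, ∑ k, F i k
      = (n : ℝ) * (∑ i, p i * (ip (d i) (Pov i *ᵥ d i)).re) - 1 := by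
    rw [Finset.sum_congr rfl fun i _ => hinner i, Finset.sum_sub_distrib, hp1,
      ← Finset.mul_sum]
  have hswap : ∑ i, ∑ k, F k i = ∑ i, ∑ k, F i k := Finset.sum_comm
  have hdouble : ∑ i, ∑ k, F i k = (1/2) * ∑ i, ∑ k, (F i k + F k i) := by
    rw [Finset.sum_congr rfl fun i (_ : i ∈ Finset.univ) => Finset.sum_add_distrib]
    rw [Finset.sum_add_distrib, hswap]; ring
  have hterm : ∀ i k : Fin n, F i k + F k i ≤
      Real.sqrt ((p i + p k) ^ 2 - 4 * p i * p k * ‖ip (d i) (d k)‖ ^ 2) := by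
    intro i k
    have e : F k i = - (p k * (ip (d k) ((Pov i - Pov k) *ᵥ d k)).re) := by
      rw [hF]
      simp only
      rw [show (Pov k - Pov i) = -(Pov i - Pov k) from (neg_sub _ _).symm,
        Matrix.neg_mulVec]
      rw [show ip (d k) (-((Pov i - Pov k) *ᵥ d k)) = - ip (d k) ((Pov i - Pov k) *ᵥ d k) by
        simp [ip, Pi.neg_apply, Finset.sum_neg_distrib]]
      rw [Complex.neg_re]; ring
    rw [e]
    simp only [hF]
    have := pair_bound (hPSD1 i k) (hPSD2 i k) (hd i) (hd k) (hp i) (hp k)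
    linarith
  have hfin : ∑ i, ∑ k, (F i k + F k i) ≤ ∑ i, ∑ k,
      Real.sqrt ((p i + p k) ^ 2 - 4 * p i * p k * ‖ip (d i) (d k)‖ ^ 2) :=
    Finset.sum_le_sum fun i _ => Finset.sum_le_sum fun k _ => hterm i k
  have hmain : ∑ i, ∑ k, F i k ≤ (1/2) * ∑ i, ∑ k,
      Real.sqrt ((p i + p k) ^ 2 - 4 * p i * p k * ‖ip (d i) (d k)‖ ^ 2) := by
    rw [hdouble]; linarith
  linarith [hkey ▸ hmain]

lemma sum_guard {n : ℕ} (f : Fin n → Fin n → ℝ) :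
    ∑ i : Fin n, ∑ k : Fin n, (if i = k then (0:ℝ) else f i k)
      = (∑ i : Fin n, ∑ k : Fin n, f i k) - ∑ i : Fin n, f i i := by
  have e : ∀ i : Fin n, ∑ k : Fin n, (if i = k then (0:ℝ) else f i k)
      = (∑ k : Fin n, f i k) - f i i := by
    intro i
    have : ∑ k : Fin n, (if i = k then (0:ℝ) else f i k)
        = ∑ k : Fin n, (f i k - if i = k then f i k else 0) := by
      apply Finset.sum_congr rfl
      intro k _
      by_cases h : i = k <;> simp [h]
    rw [this, Finset.sum_sub_distrib, Finset.sum_ite_eq]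
    simp
  rw [Finset.sum_congr rfl fun i _ => e i, Finset.sum_sub_distrib]

lemma sum_guard_s {n : ℕ} (p : Fin n → ℝ) (hp1 : ∑ i, p i = 1) :
    ∑ i : Fin n, ∑ k : Fin n, (if i = k then (0:ℝ) else p i + p k)
      = 2 * (n : ℝ) - 2 := by
  rw [sum_guard]
  have h1 : ∀ i : Fin n, ∑ k : Fin n, (p i + p k) = (n : ℝ) * p i + 1 := by
    intro i
    rw [Finset.sum_add_distrib, Finset.sum_const, Finset.card_univ, Fintype.card_fin,
      nsmul_eq_mul, hp1]
  rw [Finset.sum_congr rfl fun i _ => h1 i, Finset.sum_add_distrib, Finset.sum_const,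
    Finset.card_univ, Fintype.card_fin, nsmul_eq_mul, ← Finset.mul_sum, hp1]
  have h2 : ∑ i : Fin n, (p i + p i) = 2 := by
    rw [Finset.sum_add_distrib, hp1]; norm_num
  rw [h2]; ring

lemma cs_bound {n : ℕ} (hn : 1 ≤ n) (p : Fin n → ℝ) (hp : ∀ i, 0 ≤ p i)
    (hp1 : ∑ i, p i = 1)
    (T : Fin n → Fin n → ℝ) (hT0 : ∀ i k, 0 ≤ T i k) (hT1 : ∀ i k, T i k ≤ 1)
    (hTd : ∀ i, T i i = 1) :
    (∑ i, ∑ k, Real.sqrt ((p i + p k) ^ 2 - 4 * p i * p k * T i k)) ^ 2 ≤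
      (2 * (n : ℝ) - 2) * ((2 * (n : ℝ) - 2)
        - 4 * ∑ i, ∑ k, (if i = k then 0 else p i * p k * T i k)) := by
  classical
  set f : Fin n × Fin n → ℝ := fun z => if z.1 = z.2 then 0 else Real.sqrt (p z.1 + p z.2)
    with hf
  set g : Fin n × Fin n → ℝ := fun z => if z.1 = z.2 then 0 else
    Real.sqrt ((p z.1 + p z.2) - (4 * p z.1 * p z.2 * T z.1 z.2) / (p z.1 + p z.2)) with hg
  have hs_le : ∀ i k : Fin n, i ≠ k → p i + p k ≤ 1 := by
    intro i k hik
    rw [← hp1]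
    rw [← Finset.add_sum_erase _ _ (Finset.mem_univ i)]
    have hk : k ∈ Finset.univ.erase i :=
      Finset.mem_erase.mpr ⟨fun h => hik h.symm, Finset.mem_univ k⟩
    have : p k ≤ ∑ j ∈ Finset.univ.erase i, p j :=
      Finset.single_le_sum (fun j _ => hp j) hk
    linarith
  have ht_le : ∀ i k : Fin n, 4 * p i * p k * T i k ≤ (p i + p k) ^ 2 := by
    intro i k
    nlinarith [hp i, hp k, hT0 i k, hT1 i k, sq_nonneg (p i - p k),
      mul_nonneg (mul_nonneg (by linarith [hp i] : (0:ℝ) ≤ 4 * p i) (hp k)) (hT0 i k)]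
  have hterm : ∀ i k : Fin n,
      Real.sqrt ((p i + p k) ^ 2 - 4 * p i * p k * T i k) = f (i, k) * g (i, k) := by
    intro i k
    by_cases h : i = k
    · subst h
      simp only [hf, hg, hTd i, if_pos rfl, mul_one, zero_mul]
      rw [show (p i + p i) ^ 2 - 4 * p i * p i = 0 by ring, Real.sqrt_zero]
    · simp only [hf, hg, if_neg h]
      rcases eq_or_lt_of_le (add_nonneg (hp i) (hp k)) with hs0 | hs0
      · rw [← hs0]
        have hpi : p i = 0 := by linarith [hp i, hp k, hs0.symm ▸ (le_refl (0:ℝ))]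
        have hpk : p k = 0 := by linarith [hp i, hp k]
        simp [hpi, hpk]
      · rw [← Real.sqrt_mul (le_of_lt hs0)]
        congr 1
        field_simp
  have hLHS : (∑ i, ∑ k, Real.sqrt ((p i + p k) ^ 2 - 4 * p i * p k * T i k))
      = ∑ z : Fin n × Fin n, f z * g z := by
    rw [Fintype.sum_prod_type]
    exact Finset.sum_congr rfl fun i _ => Finset.sum_congr rfl fun k _ => hterm i k
  have hCS := Finset.sum_mul_sq_le_sq_mul_sq Finset.univ f g
  have hf2 : ∑ z : Fin n × Fin n, f z ^ 2 = 2 * (n:ℝ) - 2 := by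
    rw [Fintype.sum_prod_type, ← sum_guard_s p hp1]
    apply Finset.sum_congr rfl; intro i _
    apply Finset.sum_congr rfl; intro k _
    by_cases h : i = k
    · simp [hf, h]
    · simp only [hf, if_neg h]
      exact Real.sq_sqrt (add_nonneg (hp i) (hp k))
  have hg2 : ∑ z : Fin n × Fin n, g z ^ 2 ≤ (2 * (n:ℝ) - 2)
      - 4 * ∑ i, ∑ k, (if i = k then 0 else p i * p k * T i k) := by
    rw [Fintype.sum_prod_type]
    have hterm2 : ∀ i k : Fin n, g (i, k) ^ 2 ≤
        (if i = k then 0 else p i + p k) - 4 * (if i = k then (0:ℝ) else p i * p k * T i k) := by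
      intro i k
      by_cases h : i = k
      · simp [hg, h]
      · simp only [hg, if_neg h]
        have hppT : 0 ≤ p i * p k * T i k :=
          mul_nonneg (mul_nonneg (hp i) (hp k)) (hT0 i k)
        rcases eq_or_lt_of_le (add_nonneg (hp i) (hp k)) with hs0 | hs0
        · have hpi : p i = 0 := by nlinarith [hp i, hp k]
          have hpk : p k = 0 := by nlinarith [hp i, hp k]
          simp [hpi, hpk]
        · rw [Real.sq_sqrt ?nn]
          case nn =>
            rw [sub_nonneg, div_le_iff₀ hs0]
            nlinarith [ht_le i k]
          have hle1 : p i + p k ≤ 1 := hs_le i k h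
          have : 4 * (p i * p k * T i k) ≤ (4 * p i * p k * T i k) / (p i + p k) := by
            rw [le_div_iff₀ hs0]
            nlinarith
          linarith
    calc ∑ i, ∑ k, g (i, k) ^ 2
        ≤ ∑ i : Fin n, ∑ k : Fin n, ((if i = k then 0 else p i + p k)
            - 4 * (if i = k then (0:ℝ) else p i * p k * T i k)) :=
          Finset.sum_le_sum fun i _ => Finset.sum_le_sum fun k _ => hterm2 i k
      _ = (2 * (n:ℝ) - 2) - 4 * ∑ i, ∑ k, (if i = k then 0 else p i * p k * T i k) := by
          simp only [Finset.sum_sub_distrib, ← Finset.mul_sum]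
          rw [sum_guard_s p hp1]
  rw [hLHS]
  calc (∑ z : Fin n × Fin n, f z * g z) ^ 2
      ≤ (∑ z : Fin n × Fin n, f z ^ 2) * ∑ z : Fin n × Fin n, g z ^ 2 := hCS
    _ ≤ (2 * (n:ℝ) - 2) * ((2 * (n:ℝ) - 2)
        - 4 * ∑ i, ∑ k, (if i = k then 0 else p i * p k * T i k)) := by
        rw [hf2]
        apply mul_le_mul_of_nonneg_left hg2
        have : (1:ℝ) ≤ (n:ℝ) := by exact_mod_cast hn
        linarith

lemma hC_gen (a b : ℝ) (hab : 0 ≤ a * b) (z : ℂ) :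
    ((Real.sqrt (a * b) : ℝ) : ℂ) * z * (((Real.sqrt (b * a) : ℝ) : ℂ) * star z)
      = ((a * b * ‖z‖ ^ 2 : ℝ) : ℂ) := by
  rw [mul_comm b a]
  rw [show ((Real.sqrt (a * b) : ℝ) : ℂ) * z * (((Real.sqrt (a * b) : ℝ) : ℂ) * star z)
      = (((Real.sqrt (a * b) : ℝ) : ℂ) * ((Real.sqrt (a * b) : ℝ) : ℂ)) * (z * star z) from by
    ring]
  rw [← Complex.ofReal_mul, Real.mul_self_sqrt hab, Complex.star_def, Complex.mul_conj,
    Complex.normSq_eq_norm_sq]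
  push_cast
  ring

lemma purity_A {n : ℕ} (p : Fin n → ℝ) (hp : ∀ i, 0 ≤ p i) (u : Fin n → Fin n → ℂ) :
    purity (Matrix.of fun i k => ((Real.sqrt (p i * p k) : ℝ) : ℂ) * ip (u k) (u i))
      = ∑ i, ∑ k, p i * p k * ‖ip (u k) (u i)‖ ^ 2 := by
  set ρ : Matrix (Fin n) (Fin n) ℂ :=
    Matrix.of fun i k => ((Real.sqrt (p i * p k) : ℝ) : ℂ) * ip (u k) (u i) with hρ
  have htr : (ρ * ρ).trace = ∑ i, ∑ k, ρ i k * ρ k i := by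
    simp [Matrix.trace, Matrix.mul_apply, Matrix.diag]
  have hterm : ∀ i k : Fin n, ρ i k * ρ k i = ((p i * p k * ‖ip (u k) (u i)‖ ^ 2 : ℝ) : ℂ) := by
    intro i k
    rw [hρ]
    simp only [Matrix.of_apply]
    rw [show ip (u i) (u k) = star (ip (u k) (u i)) from (star_ip (u k) (u i)).symm]
    exact hC_gen (p i) (p k) (mul_nonneg (hp i) (hp k)) _
  rw [purity, htr, Finset.sum_congr rfl fun i _ => Finset.sum_congr rfl fun k _ => hterm i k]
  rw [Complex.re_sum]
  apply Finset.sum_congr rfl; intro i _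
  rw [Complex.re_sum]
  apply Finset.sum_congr rfl; intro k _
  exact Complex.ofReal_re _

lemma purity_AB {m n : ℕ} (p : Fin n → ℝ) (hp : ∀ i, 0 ≤ p i)
    (d : Fin n → Fin m → ℂ) (u : Fin n → Fin n → ℂ) (hu : ∀ i, ip (u i) (u i) = 1) :
    purity (Matrix.of fun (x y : Fin n × Fin n) =>
      ((Real.sqrt (p x.1 * p y.1) : ℝ) : ℂ) * ip (d y.1) (d x.1) * u x.1 x.2 * star (u y.1 y.2))
      = ∑ i, ∑ j, p i * p j * ‖ip (d j) (d i)‖ ^ 2 := by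
  set ρ : Matrix (Fin n × Fin n) (Fin n × Fin n) ℂ :=
    Matrix.of fun (x y : Fin n × Fin n) =>
      ((Real.sqrt (p x.1 * p y.1) : ℝ) : ℂ) * ip (d y.1) (d x.1) * u x.1 x.2 * star (u y.1 y.2)
    with hρ
  have htr : (ρ * ρ).trace = ∑ x : Fin n × Fin n, ∑ y : Fin n × Fin n, ρ x y * ρ y x := by
    simp [Matrix.trace, Matrix.mul_apply, Matrix.diag]
  have huu : ∀ j, ∑ β, star (u j β) * u j β = 1 := fun j => hu j
  have huu' : ∀ i, ∑ α, u i α * star (u i α) = 1 := by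
    intro i
    rw [← hu i]
    exact Finset.sum_congr rfl fun α _ => mul_comm _ _
  have e1 : ∀ (x : Fin n × Fin n) (j : Fin n), ∑ β, ρ x (j, β) * ρ (j, β) x
      = (u x.1 x.2 * star (u x.1 x.2)) * ((p x.1 * p j * ‖ip (d j) (d x.1)‖ ^ 2 : ℝ) : ℂ) := by
    intro x j
    have e2 : ∀ β, ρ x (j, β) * ρ (j, β) x
        = ((u x.1 x.2 * star (u x.1 x.2)) *
            (((Real.sqrt (p x.1 * p j) : ℝ) : ℂ) * ip (d j) (d x.1) *
              (((Real.sqrt (p j * p x.1) : ℝ) : ℂ) * ip (d x.1) (d j)))) *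
          (star (u j β) * u j β) := by
      intro β
      simp only [hρ, Matrix.of_apply]
      ring
    rw [Finset.sum_congr rfl fun β _ => e2 β, ← Finset.mul_sum, huu j, mul_one]
    rw [show ip (d x.1) (d j) = star (ip (d j) (d x.1)) from (star_ip (d j) (d x.1)).symm]
    rw [hC_gen (p x.1) (p j) (mul_nonneg (hp x.1) (hp j)) _]
  have e3 : ∀ x : Fin n × Fin n, ∑ y : Fin n × Fin n, ρ x y * ρ y x
      = (u x.1 x.2 * star (u x.1 x.2)) *
          ∑ j, ((p x.1 * p j * ‖ip (d j) (d x.1)‖ ^ 2 : ℝ) : ℂ) := by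
    intro x
    rw [Fintype.sum_prod_type]
    rw [Finset.sum_congr rfl fun j _ => e1 x j, ← Finset.mul_sum]
  have e4 : ∑ x : Fin n × Fin n, ∑ y : Fin n × Fin n, ρ x y * ρ y x
      = ∑ i, ∑ j, ((p i * p j * ‖ip (d j) (d i)‖ ^ 2 : ℝ) : ℂ) := by
    rw [Finset.sum_congr rfl fun x _ => e3 x, Fintype.sum_prod_type]
    apply Finset.sum_congr rfl; intro i _
    have hre : ∀ y : Fin n, u (i, y).1 (i, y).2 * star (u (i, y).1 (i, y).2) *
        ∑ j : Fin n, ((p (i, y).1 * p j * ‖ip (d j) (d (i, y).1)‖ ^ 2 : ℝ) : ℂ)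
        = u i y * star (u i y) * ∑ j : Fin n, ((p i * p j * ‖ip (d j) (d i)‖ ^ 2 : ℝ) : ℂ) :=
      fun y => rfl
    rw [Finset.sum_congr rfl fun y _ => hre y, ← Finset.sum_mul, huu' i, one_mul]
  rw [purity, htr, e4, Complex.re_sum]
  apply Finset.sum_congr rfl; intro i _
  rw [Complex.re_sum]
  apply Finset.sum_congr rfl; intro j _
  exact Complex.ofReal_re _

/-- triality among path distinguishability, visibility and entanglement for
a pure bipartite input state `ψ_AB = ∑ i, √(p i) • e_i ⊗ u_i` in the `n`-path
interferometer with detectors and quantum memory. -/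
theorem stmt4 (n m : ℕ) (hn : 2 ≤ n) (d : Fin n → Fin m → ℂ)
    (hd : ∀ i, ip (d i) (d i) = 1)
    (p : Fin n → ℝ) (hp : ∀ i, 0 ≤ p i) (hp1 : ∑ i, p i = 1)
    (u : Fin n → Fin n → ℂ) (hu : ∀ i, ip (u i) (u i) = 1)
    -- the reduced state of the particle: (ρ_A)_{ik} = √(p_i p_k) ⟨u_k, u_i⟩
    (ρA : Matrix (Fin n) (Fin n) ℂ)
    (hρA : ρA = Matrix.of fun i k => (Real.sqrt (p i * p k) : ℂ) * ip (u k) (u i))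
    -- the normalized concurrence squared: E(ψ)² = (2(n−1)/n²)(1 − Tr(ρ_A²))
    (Esq : ℝ) (hE : Esq = (2 * ((n : ℝ) - 1) / (n : ℝ) ^ 2) * (1 - purity ρA))
    -- the post-interaction bipartite state
    (ρtAB : Matrix (Fin n × Fin n) (Fin n × Fin n) ℂ)
    (hρtAB : ρtAB = Matrix.of fun x y =>
      (Real.sqrt (p x.1 * p y.1) : ℂ) * ip (d y.1) (d x.1) * u x.1 x.2 * star (u y.1 y.2)) :
    (Ps d p - 1 / n) ^ 2 + (Vis d ρA) ^ 2 + Esq ≤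
      ((n : ℝ) ^ 2 - 1) / (n : ℝ) ^ 2 -
        (2 * ((n : ℝ) - 1) / (n : ℝ) ^ 2) * purity ρtAB := by
  classical
  have hn2 : (2:ℝ) ≤ (n:ℝ) := by exact_mod_cast hn
  have hnpos : (0:ℝ) < n := by linarith
  have hnne : (n:ℝ) ≠ 0 := ne_of_gt hnpos
  set c : ℝ := 2 * ((n : ℝ) - 1) / (n : ℝ) ^ 2 with hc
  have hc0 : 0 ≤ c := by
    rw [hc]; apply div_nonneg; · linarith
    · positivity
  have hT0 : ∀ i k : Fin n, (0:ℝ) ≤ ‖ip (d i) (d k)‖ ^ 2 := fun i k => sq_nonneg _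
  have hT1 : ∀ i k : Fin n, ‖ip (d i) (d k)‖ ^ 2 ≤ 1 := by
    intro i k
    have h := psd_cs (Matrix.PosSemidef.one (n := Fin m) (R := ℂ)) (d i) (d k)
    rw [Matrix.one_mulVec, Matrix.one_mulVec] at h
    rw [hd i, hd k] at h
    simpa using h
  have hTd : ∀ i : Fin n, ‖ip (d i) (d i)‖ ^ 2 = 1 := by
    intro i; rw [hd i]; norm_num
  have hUd : ∀ i : Fin n, ‖ip (u i) (u i)‖ ^ 2 = 1 := by
    intro i; rw [hu i]; norm_num
  set Q : ℝ := ∑ i, (p i) ^ 2 with hQ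
  set ST : ℝ := ∑ i, ∑ k, (if i = k then 0 else p i * p k * ‖ip (d i) (d k)‖ ^ 2) with hST
  set SU : ℝ := ∑ i, ∑ k, (if i = k then 0 else p i * p k * ‖ip (u k) (u i)‖ ^ 2) with hSU
  -- purity of ρA
  have hpurA : purity ρA = Q + SU := by
    have h1 : purity ρA = ∑ i, ∑ k, p i * p k * ‖ip (u k) (u i)‖ ^ 2 := by
      rw [hρA]; exact purity_A p hp u
    have h2 := sum_guard (fun i k => p i * p k * ‖ip (u k) (u i)‖ ^ 2)
    have h3 : ∑ i, p i * p i * ‖ip (u i) (u i)‖ ^ 2 = Q := by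
      rw [hQ]; apply Finset.sum_congr rfl; intro i _; rw [hUd i]; ring
    linarith [h1, h2, h3, hSU]
  -- purity of ρtAB
  have hpurAB : purity ρtAB = Q + ST := by
    have h1 : purity ρtAB = ∑ i, ∑ j, p i * p j * ‖ip (d j) (d i)‖ ^ 2 := by
      rw [hρtAB]; exact purity_AB p hp d u hu
    have h1' : purity ρtAB = ∑ i, ∑ j, p i * p j * ‖ip (d i) (d j)‖ ^ 2 := by
      rw [h1]
      apply Finset.sum_congr rfl; intro i _
      apply Finset.sum_congr rfl; intro j _
      rw [norm_ip_swap]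
    have h2 := sum_guard (fun i k => p i * p k * ‖ip (d i) (d k)‖ ^ 2)
    have h3 : ∑ i, p i * p i * ‖ip (d i) (d i)‖ ^ 2 = Q := by
      rw [hQ]; apply Finset.sum_congr rfl; intro i _; rw [hTd i]; ring
    linarith [h1', h2, h3, hST]
  -- visibility bound
  have hnormρA : ∀ i k : Fin n, ‖ρA i k‖ ^ 2 = p i * p k * ‖ip (u k) (u i)‖ ^ 2 := by
    intro i k
    rw [hρA]
    simp only [Matrix.of_apply]
    rw [norm_mul, mul_pow, Complex.norm_real, Real.norm_eq_abs, abs_of_nonneg (Real.sqrt_nonneg _),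
      Real.sq_sqrt (mul_nonneg (hp i) (hp k))]
  have hVis : (Vis d ρA) ^ 2 ≤ c * SU := by
    rw [Vis, Real.sq_sqrt ?pos]
    case pos =>
      apply mul_nonneg (by rw [← hc]; exact hc0)
      apply Finset.sum_nonneg; intro i _
      apply Finset.sum_nonneg; intro k _
      by_cases h : i = k
      · simp [h]
      · simp only [if_neg h]
        positivity
    rw [← hc, hSU]
    apply mul_le_mul_of_nonneg_left _ hc0
    apply Finset.sum_le_sum; intro i _
    apply Finset.sum_le_sum; intro k _
    by_cases h : i = k
    · simp [h]
    · simp only [if_neg h]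
      rw [hnormρA i k, norm_ip_swap (d k) (d i)]
      have := hT1 i k
      nlinarith [mul_nonneg (mul_nonneg (hp i) (hp k)) (sq_nonneg ‖ip (u k) (u i)‖),
        hT0 i k]
  -- the Ps bound
  set SA : ℝ := ∑ i, ∑ k,
    Real.sqrt ((p i + p k) ^ 2 - 4 * p i * p k * ‖ip (d i) (d k)‖ ^ 2) with hSA
  set S : Set ℝ := { x : ℝ | ∃ Pov : Fin n → Matrix (Fin m) (Fin m) ℂ,
    (∀ i, (Pov i).PosSemidef) ∧ (∑ i, Pov i) = 1 ∧
    x = ∑ i, p i * (ip (d i) ((Pov i) *ᵥ (d i))).re } with hSdef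
  have hPsS : Ps d p = sSup S := rfl
  have hub : ∀ x ∈ S, x ≤ (1 + (1/2) * SA) / n := by
    intro x hx
    obtain ⟨Pov, hPSD, hsumP, hxeq⟩ := hx
    have hb := povm_bound d hd p hp hp1 Pov hPSD hsumP
    rw [← hSA] at hb
    rw [hxeq, le_div_iff₀ hnpos, mul_comm]
    exact hb
  have hmem : (1/(n:ℝ)) ∈ S := by
    refine ⟨fun _ => (((n:ℝ)⁻¹ : ℝ) : ℂ) • 1, ?_, ?_, ?_⟩
    · intro i
      have h1 : (0:ℂ) ≤ (((n:ℝ)⁻¹ : ℝ) : ℂ) := Complex.zero_le_real.mpr (by positivity)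
      exact Matrix.PosSemidef.one.smul h1
    · rw [Finset.sum_const, Finset.card_univ, Fintype.card_fin,
        ← Nat.cast_smul_eq_nsmul ℂ, smul_smul]
      rw [show (((n:ℝ)⁻¹ : ℝ) : ℂ) = ((n:ℕ):ℂ)⁻¹ by push_cast; ring]
      rw [mul_inv_cancel₀ (by exact_mod_cast hnne), one_smul]
    · have hipc : ∀ i : Fin n,
          ip (d i) (((((n:ℝ)⁻¹ : ℝ) : ℂ) • (1 : Matrix (Fin m) (Fin m) ℂ)) *ᵥ d i)
            = (((n:ℝ)⁻¹ : ℝ) : ℂ) := by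
        intro i
        rw [Matrix.smul_mulVec, Matrix.one_mulVec]
        rw [show ip (d i) ((((n:ℝ)⁻¹ : ℝ) : ℂ) • d i)
            = (((n:ℝ)⁻¹ : ℝ) : ℂ) * ip (d i) (d i) from ?_]
        · rw [hd i, mul_one]
        · rw [ip, ip, Finset.mul_sum]
          apply Finset.sum_congr rfl; intro j _
          rw [Pi.smul_apply, smul_eq_mul]; ring
      rw [Finset.sum_congr rfl fun i _ => by rw [hipc i, Complex.ofReal_re]]
      rw [← Finset.sum_mul, hp1, one_mul, one_div]
  have hbdd : BddAbove S := ⟨(1 + (1/2) * SA) / n, fun x hx => hub x hx⟩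
  have hge : 1/(n:ℝ) ≤ Ps d p := by rw [hPsS]; exact le_csSup hbdd hmem
  have hle : Ps d p ≤ (1 + (1/2) * SA) / n := by
    rw [hPsS]; exact csSup_le ⟨_, hmem⟩ hub
  have hSA0 : 0 ≤ SA := by
    rw [hSA]
    apply Finset.sum_nonneg; intro i _
    apply Finset.sum_nonneg; intro k _
    exact Real.sqrt_nonneg _
  have hPs2 : Ps d p - 1/(n:ℝ) ≤ SA / (2*(n:ℝ)) := by
    have e : (1 + (1/2) * SA) / n = 1/(n:ℝ) + SA / (2*(n:ℝ)) := by
      field_simp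
    rw [e] at hle; linarith
  have hsq : (Ps d p - 1/(n:ℝ)) ^ 2 ≤ (SA / (2*(n:ℝ))) ^ 2 := by
    apply pow_le_pow_left₀ (by linarith) hPs2
  have hCS := cs_bound (by omega : 1 ≤ n) p hp hp1
    (fun i k => ‖ip (d i) (d k)‖ ^ 2) hT0 hT1 hTd
  rw [← hSA, ← hST] at hCS
  have hA1 : (Ps d p - 1/(n:ℝ)) ^ 2 ≤ ((n:ℝ) - 1) ^ 2 / (n:ℝ) ^ 2 - c * ST := by
    have e1 : (SA / (2*(n:ℝ))) ^ 2 = SA ^ 2 / (4 * (n:ℝ)^2) := by ring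
    have e2 : SA ^ 2 / (4 * (n:ℝ)^2)
        ≤ (2 * (n:ℝ) - 2) * ((2 * (n:ℝ) - 2) - 4 * ST) / (4 * (n:ℝ)^2) :=
      (div_le_div_iff_of_pos_right (by positivity)).mpr hCS
    have e3 : (2 * (n:ℝ) - 2) * ((2 * (n:ℝ) - 2) - 4 * ST) / (4 * (n:ℝ)^2)
        = ((n:ℝ) - 1) ^ 2 / (n:ℝ) ^ 2 - c * ST := by
      rw [hc]; field_simp; ring
    calc (Ps d p - 1/(n:ℝ)) ^ 2 ≤ (SA / (2*(n:ℝ))) ^ 2 := hsq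
      _ = SA ^ 2 / (4 * (n:ℝ)^2) := e1
      _ ≤ (2 * (n:ℝ) - 2) * ((2 * (n:ℝ) - 2) - 4 * ST) / (4 * (n:ℝ)^2) := e2
      _ = _ := e3
  -- final assembly
  have hkey : ((n:ℝ) - 1) ^ 2 / (n:ℝ) ^ 2 + c = ((n:ℝ) ^ 2 - 1) / (n:ℝ) ^ 2 := by
    rw [hc]; field_simp; ring
  rw [hE, hpurA, hpurAB]
  have hexp1 : c * (1 - (Q + SU)) = c - c*Q - c*SU := by ring
  have hexp2 : c * (Q + ST) = c*Q + c*ST := by ring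
  have hgoal : (Ps d p - 1/(n:ℝ)) ^ 2 + (Vis d ρA) ^ 2 + c * (1 - (Q + SU))
      ≤ ((n:ℝ) ^ 2 - 1) / (n:ℝ) ^ 2 - c * (Q + ST) := by
    rw [hexp1, hexp2]
    linarith [hA1, hVis, hkey]
  exact hgoal
end
end
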